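/- Let τ > 0, M ≥ 1, let p, q be reals with q > 0 and p > max(q, 1), and let φ : [−τ, 0] → ℝ be continuous with φ(0) ≥ M, φ(0) ≥ M^{1/p}·|φ(t)|^{q/p} for all t ∈ [−τ, 0], and φ(0) > M^{1/p}·|φ(−τ)|^{q/p}. Then any solution y of the delay differential equation y′(t) = |y(t)|^p − M·|y(t−τ)|^q for t > 0, with y(t) = φ(t) on [−τ, 0], blows up in finite time: the maximal interval of existence [0, T*) has T* < ∞ and y(t) → +∞ as t → T*⁻. -/

import Mathlib

open Set Filter

/-- `y` is a solution on `[0, b)` of the delay equation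
`y′(t) = |y(t)|^p − M·|y(t−τ)|^q` with history `φ` on `[−τ, 0]`:
`y` is continuous on `[−τ, b)`, agrees with `φ` on `[−τ, 0]`, and is
differentiable on `(0, b)` with the prescribed derivative. -/
def DelaySolOn (τ M p q : ℝ) (φ y : ℝ → ℝ) (b : ℝ) : Prop :=
  ContinuousOn y (Set.Ico (-τ) b) ∧
  (∀ t ∈ Set.Icc (-τ) (0:ℝ), y t = φ t) ∧
  ∀ t ∈ Set.Ioo (0:ℝ) b, HasDerivAt y (|y t| ^ p - M * |y (t - τ)| ^ q) t

/-- `y` is a global solution (on `[0, ∞)`) of the delay equation with history `φ`. -/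
def DelaySolGlobal (τ M p q : ℝ) (φ y : ℝ → ℝ) : Prop :=
  ContinuousOn y (Set.Ici (-τ)) ∧
  (∀ t ∈ Set.Icc (-τ) (0:ℝ), y t = φ t) ∧
  ∀ t ∈ Set.Ioi (0:ℝ), HasDerivAt y (|y t| ^ p - M * |y (t - τ)| ^ q) t

/-- Local gluing of derivatives at a point. -/
lemma hasDerivAt_of_local_glue {f g : ℝ → ℝ} {x a b : ℝ} (ha : a < x) (hb : x < b)
    (hder : ∀ s, s ∈ Set.Ioo a b → s ≠ x → HasDerivAt f (g s) s)
    (hcf : ContinuousAt f x) (hcg : ContinuousAt g x) : HasDerivAt f (g x) x := by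
  rw [hasDerivAt_iff_tendsto_slope]
  rw [Metric.tendsto_nhdsWithin_nhds]
  intro ε hε
  obtain ⟨δ, hδ, hgδ⟩ := Metric.continuousAt_iff.mp hcg ε hε
  refine ⟨min δ (min (x - a) (b - x)), lt_min hδ (lt_min (by linarith) (by linarith)), ?_⟩
  intro s hs hdist
  have hsx : s ≠ x := hs
  have hd1 : dist s x < δ := lt_of_lt_of_le hdist (min_le_left _ _)
  have hd2 : dist s x < x - a := lt_of_lt_of_le hdist ((min_le_right _ _).trans (min_le_left _ _))
  have hd3 : dist s x < b - x := lt_of_lt_of_le hdist ((min_le_right _ _).trans (min_le_right _ _))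
  rw [Real.dist_eq] at hd2 hd3
  have hsa : a < s := by cases abs_lt.mp hd2 with | intro h1 h2 => linarith
  have hsb : s < b := by cases abs_lt.mp hd3 with | intro h1 h2 => linarith
  have key : ∃ ξ, ξ ∈ Set.Ioo a b ∧ dist ξ x < dist s x ∧ g ξ = slope f x s := by
    rcases lt_or_gt_of_ne hsx with hlt | hgt
    · have hcont : ContinuousOn f (Set.Icc s x) := by
        intro u hu
        rcases eq_or_lt_of_le hu.2 with rfl | hux
        · exact hcf.continuousWithinAt
        · exact ((hder u ⟨lt_of_lt_of_le hsa hu.1, hux.trans hb⟩ hux.ne).continuousAt).continuousWithinAt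
      obtain ⟨ξ, hξ, hslope⟩ := exists_hasDerivAt_eq_slope f g hlt hcont
        (fun u hu => hder u ⟨hsa.trans hu.1, hu.2.trans hb⟩ hu.2.ne)
      refine ⟨ξ, ⟨hsa.trans hξ.1, hξ.2.trans hb⟩, ?_, ?_⟩
      · rw [Real.dist_eq, Real.dist_eq, abs_of_neg (by linarith [hξ.2] : ξ - x < 0),
          abs_of_neg (by linarith : s - x < 0)]
        linarith [hξ.1]
      · rw [hslope, slope_def_field, ← neg_sub (f x) (f s), ← neg_sub x s, neg_div_neg_eq]
    · have hcont : ContinuousOn f (Set.Icc x s) := by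
        intro u hu
        rcases eq_or_lt_of_le hu.1 with rfl | hux
        · exact hcf.continuousWithinAt
        · exact ((hder u ⟨ha.trans hux, lt_of_le_of_lt hu.2 hsb⟩ hux.ne').continuousAt).continuousWithinAt
      obtain ⟨ξ, hξ, hslope⟩ := exists_hasDerivAt_eq_slope f g hgt hcont
        (fun u hu => hder u ⟨ha.trans hu.1, hu.2.trans hsb⟩ hu.1.ne')
      refine ⟨ξ, ⟨ha.trans hξ.1, hξ.2.trans hsb⟩, ?_, ?_⟩
      · rw [Real.dist_eq, Real.dist_eq, abs_of_pos (by linarith [hξ.1] : (0:ℝ) < ξ - x),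
          abs_of_pos (by linarith : (0:ℝ) < s - x)]
        linarith [hξ.2]
      · rw [hslope, slope_def_field]
  obtain ⟨ξ, hξab, hξd, hξs⟩ := key
  rw [← hξs]
  exact hgδ (lt_of_lt_of_le (lt_of_le_of_lt hξd.le hdist) (min_le_left _ _))

/-- Riccati-type blow-up: a function with `y′ ≥ y^p/2`, `y ≥ 1` on `[a, ∞)`, `p > 1`,
cannot exist. -/
lemma riccati_blowup (p : ℝ) (hp1 : 1 < p) {y d : ℝ → ℝ} {a : ℝ}
    (hder : ∀ t ∈ Set.Ici a, HasDerivAt y (d t) t)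
    (hge1 : ∀ t ∈ Set.Ici a, 1 ≤ y t)
    (hged : ∀ t ∈ Set.Ici a, (y t) ^ p / 2 ≤ d t) : False := by
  have hypos : ∀ t ∈ Set.Ici a, 0 < y t := fun t ht => lt_of_lt_of_le zero_lt_one (hge1 t ht)
  set v : ℝ → ℝ := fun t => (y t) ^ (1 - p) with hvdef
  set u : ℝ → ℝ := fun t => v t + ((p - 1) / 2) * t with hudef
  have hvpos : ∀ t ∈ Set.Ici a, 0 < v t := fun t ht => Real.rpow_pos_of_pos (hypos t ht) _
  have hu : ∀ t ∈ Set.Ici a,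
      HasDerivAt u ((1 - p) * (y t) ^ (1 - p - 1) * d t + (p - 1) / 2) t := by
    intro t ht
    have h1 : HasDerivAt v ((1 - p) * (y t) ^ (1 - p - 1) * d t) t :=
      (Real.hasDerivAt_rpow_const (Or.inl (hypos t ht).ne')).comp t (hder t ht)
    have h2 : HasDerivAt (fun s => ((p - 1) / 2) * s) ((p - 1) / 2) t := by
      simpa using (hasDerivAt_id t).const_mul ((p - 1) / 2)
    exact h1.add h2
  have hunonpos : ∀ t ∈ Set.Ici a, (1 - p) * (y t) ^ (1 - p - 1) * d t + (p - 1) / 2 ≤ 0 := by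
    intro t ht
    have hyp : 0 < (y t) ^ p := Real.rpow_pos_of_pos (hypos t ht) p
    have hneg : (1 - p) * (y t) ^ (1 - p - 1) ≤ 0 :=
      mul_nonpos_of_nonpos_of_nonneg (by linarith) (Real.rpow_nonneg (hypos t ht).le _)
    have h3 : (1 - p) * (y t) ^ (1 - p - 1) * d t ≤
        (1 - p) * (y t) ^ (1 - p - 1) * ((y t) ^ p / 2) :=
      mul_le_mul_of_nonpos_left (hged t ht) hneg
    have h4 : (1 - p) * (y t) ^ (1 - p - 1) * ((y t) ^ p / 2) = (1 - p) / 2 := by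
      have hne : (y t) ^ p ≠ 0 := hyp.ne'
      have hmul : (y t) ^ ((1:ℝ) - p - 1) = ((y t) ^ p)⁻¹ := by
        rw [show (1:ℝ) - p - 1 = -p by ring, Real.rpow_neg (hypos t ht).le]
      rw [hmul]
      field_simp
    linarith
  have hanti : AntitoneOn u (Set.Ici a) := by
    apply antitoneOn_of_deriv_nonpos (convex_Ici a)
    · exact fun t ht => (hu t ht).continuousAt.continuousWithinAt
    · intro t ht
      rw [interior_Ici] at ht
      exact (hu t (Set.mem_Ioi.mp ht).le).differentiableAt.differentiableWithinAt
    · intro t ht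
      rw [interior_Ici] at ht
      rw [(hu t (Set.mem_Ioi.mp ht).le).deriv]
      exact hunonpos t (Set.mem_Ioi.mp ht).le
  set T : ℝ := a + (2 * v a + 2) / (p - 1) with hT
  have hvapos : 0 < v a := hvpos a (le_refl a)
  have hTa : a ≤ T := by
    have h : 0 < (2 * v a + 2) / (p - 1) := div_pos (by linarith) (by linarith)
    rw [hT]
    linarith
  have huT : u T ≤ u a := hanti (le_refl a) hTa hTa
  have hvT : 0 < v T := hvpos T hTa
  have hp1ne : p - 1 ≠ 0 := by linarith
  have hcompute : ((p - 1) / 2) * (T - a) = v a + 1 := by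
    have h : T - a = (2 * v a + 2) / (p - 1) := by rw [hT]; ring
    rw [h]
    field_simp
  simp only [hudef] at huT
  nlinarith

/-- The raising-to-the-`p` trick. -/
lemma delay_pow_le {M p q x c : ℝ} (hM0 : 0 ≤ M) (hp0 : 0 < p)
    (h : M ^ (1/p) * |x| ^ (q/p) ≤ c) : M * |x| ^ q ≤ c ^ p := by
  have pow_eq : (M ^ (1/p) * |x| ^ (q/p)) ^ p = M * |x| ^ q := by
    rw [Real.mul_rpow (Real.rpow_nonneg hM0 _) (Real.rpow_nonneg (abs_nonneg _) _),
      ← Real.rpow_mul hM0, ← Real.rpow_mul (abs_nonneg x), one_div_mul_cancel hp0.ne',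
      div_mul_cancel₀ q hp0.ne', Real.rpow_one]
  rw [← pow_eq]
  exact Real.rpow_le_rpow
    (mul_nonneg (Real.rpow_nonneg hM0 _) (Real.rpow_nonneg (abs_nonneg _) _)) h hp0.le

lemma delay_pow_lt {M p q x c : ℝ} (hM0 : 0 ≤ M) (hp0 : 0 < p)
    (h : M ^ (1/p) * |x| ^ (q/p) < c) : M * |x| ^ q < c ^ p := by
  have pow_eq : (M ^ (1/p) * |x| ^ (q/p)) ^ p = M * |x| ^ q := by
    rw [Real.mul_rpow (Real.rpow_nonneg hM0 _) (Real.rpow_nonneg (abs_nonneg _) _),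
      ← Real.rpow_mul hM0, ← Real.rpow_mul (abs_nonneg x), one_div_mul_cancel hp0.ne',
      div_mul_cancel₀ q hp0.ne', Real.rpow_one]
  rw [← pow_eq]
  exact Real.rpow_lt_rpow
    (mul_nonneg (Real.rpow_nonneg hM0 _) (Real.rpow_nonneg (abs_nonneg _) _)) h hp0

/-- Core lemma: the derivative of any solution is positive on `(0, b)`. -/
lemma delay_core (τ M p q : ℝ) (hτ : 0 < τ) (hM : 1 ≤ M)
    (hq : 0 < q) (hp : max q 1 < p)
    (φ y : ℝ → ℝ) (hφ0 : M ≤ φ 0)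
    (hφ : ∀ t ∈ Set.Icc (-τ) (0:ℝ), M ^ (1 / p) * |φ t| ^ (q / p) ≤ φ 0)
    (hφτ : M ^ (1 / p) * |φ (-τ)| ^ (q / p) < φ 0)
    {b : ℝ} (hy : DelaySolOn τ M p q φ y b) :
    ∀ t ∈ Set.Ioo (0:ℝ) b, 0 < |y t| ^ p - M * |y (t - τ)| ^ q := by
  have hp1 : 1 < p := lt_of_le_of_lt (le_max_right q 1) hp
  have hpq : q < p := lt_of_le_of_lt (le_max_left q 1) hp
  have hp0 : (0:ℝ) < p := zero_lt_one.trans hp1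
  have hM0 : (0:ℝ) ≤ M := zero_le_one.trans hM
  have hφ0pos : (0:ℝ) < φ 0 := lt_of_lt_of_le zero_lt_one (hM.trans hφ0)
  have hτ' : -τ ≤ 0 := neg_nonpos.mpr hτ.le
  have key : ∀ t ∈ Set.Icc (-τ) (0:ℝ), M * |φ t| ^ q ≤ φ 0 ^ p :=
    fun t ht => delay_pow_le hM0 hp0 (hφ t ht)
  have keyτ : M * |φ (-τ)| ^ q < φ 0 ^ p := delay_pow_lt hM0 hp0 hφτ
  have key0 : M ≤ φ 0 ^ (p - q) := by
    have h := key 0 ⟨hτ', le_refl 0⟩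
    rw [abs_of_pos hφ0pos] at h
    have hq0 : (0:ℝ) < φ 0 ^ q := Real.rpow_pos_of_pos hφ0pos q
    rw [Real.rpow_sub hφ0pos, le_div_iff₀ hq0]
    exact h
  obtain ⟨hc, hist, hode⟩ := hy
  set D : ℝ → ℝ := fun t => |y t| ^ p - M * |y (t - τ)| ^ q with hD
  by_contra hcon
  push_neg at hcon
  obtain ⟨s₁, hs₁, hs₁D⟩ := hcon
  have hb0 : (0:ℝ) < b := lt_trans hs₁.1 hs₁.2
  have hsub : Set.Ico (0:ℝ) b ⊆ Set.Ico (-τ) b := fun x hx => ⟨le_trans hτ' hx.1, hx.2⟩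
  have hycont : ContinuousOn y (Set.Ico (0:ℝ) b) := hc.mono hsub
  have hyshift : ContinuousOn (fun t => y (t - τ)) (Set.Ico (0:ℝ) b) :=
    hc.comp ((continuous_id.sub continuous_const).continuousOn)
      (fun x hx => ⟨by simp [hx.1], by linarith [hx.2]⟩)
  have hDcont : ContinuousOn D (Set.Ico (0:ℝ) b) :=
    (hycont.abs.rpow_const fun x _ => Or.inr hp0.le).sub
      (continuousOn_const.mul (hyshift.abs.rpow_const fun x _ => Or.inr hq.le))
  set S : Set ℝ := {t | t ∈ Set.Ioo (0:ℝ) b ∧ D t ≤ 0} with hS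
  have hSne : S.Nonempty := ⟨s₁, hs₁, hs₁D⟩
  have hSbdd : BddBelow S := ⟨0, fun s hs => hs.1.1.le⟩
  set t₀ : ℝ := sInf S with ht₀
  have ht₀0 : 0 ≤ t₀ := le_csInf hSne (fun s hs => hs.1.1.le)
  have ht₀b : t₀ < b := lt_of_le_of_lt (csInf_le hSbdd ⟨hs₁, hs₁D⟩) hs₁.2
  have hpos : ∀ s, 0 < s → s < t₀ → 0 < D s := by
    intro s hs0 hst
    by_contra h
    push_neg at h
    exact absurd (csInf_le hSbdd ⟨⟨hs0, hst.trans ht₀b⟩, h⟩) (not_le.mpr hst)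
  have hmono : StrictMonoOn y (Set.Icc 0 t₀) := by
    apply strictMonoOn_of_deriv_pos (convex_Icc 0 t₀)
    · exact hc.mono (fun x hx => ⟨le_trans hτ' hx.1, lt_of_le_of_lt hx.2 ht₀b⟩)
    · intro x hx
      rw [interior_Icc] at hx
      rw [(hode x ⟨hx.1, hx.2.trans ht₀b⟩).deriv]
      exact hpos x hx.1 hx.2
  have hy0 : y 0 = φ 0 := hist 0 ⟨hτ', le_refl 0⟩
  have hyge : φ 0 ≤ y t₀ := by
    rcases eq_or_lt_of_le ht₀0 with h | h
    · rw [← h, hy0]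
    · exact (hy0 ▸ hmono ⟨le_refl 0, ht₀0⟩ ⟨ht₀0, le_refl t₀⟩ h).le
  have hyt₀pos : 0 < y t₀ := lt_of_lt_of_le hφ0pos hyge
  have hDt₀ : 0 < D t₀ := by
    rcases le_or_gt t₀ τ with hcase | hcase
    · have hmem : t₀ - τ ∈ Set.Icc (-τ) (0:ℝ) := ⟨by linarith, by linarith⟩
      have hyφ : y (t₀ - τ) = φ (t₀ - τ) := hist _ hmem
      rcases eq_or_lt_of_le ht₀0 with h | h
      · have e1 : y t₀ = φ 0 := by rw [← h, hy0]
        have e2 : y (t₀ - τ) = φ (-τ) := by rw [hyφ, ← h, zero_sub]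
        simp only [hD]
        rw [e1, e2, abs_of_pos hφ0pos]
        linarith [keyτ]
      · have h1 : φ 0 ^ p < |y t₀| ^ p := by
          rw [abs_of_pos hyt₀pos]
          exact Real.rpow_lt_rpow hφ0pos.le
            (hy0 ▸ hmono ⟨le_refl 0, ht₀0⟩ ⟨ht₀0, le_refl t₀⟩ h) hp0
        have h2 : M * |y (t₀ - τ)| ^ q ≤ φ 0 ^ p := hyφ ▸ key _ hmem
        simp only [hD]
        linarith
    · set s := t₀ - τ with hs
      have hs0 : 0 < s := by simp [hs]; linarith
      have hst : s < t₀ := by simp [hs]; linarith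
      have hys : φ 0 < y s := hy0 ▸ hmono ⟨le_refl 0, ht₀0⟩ ⟨hs0.le, hst.le⟩ hs0
      have hyspos : 0 < y s := hφ0pos.trans hys
      have hyst : y s < y t₀ := hmono ⟨hs0.le, hst.le⟩ ⟨ht₀0, le_refl t₀⟩ hst
      have h1 : M * (y s) ^ q ≤ (y s) ^ p := by
        have hMle : M ≤ (y s) ^ (p - q) :=
          key0.trans (Real.rpow_le_rpow hφ0pos.le hys.le (by linarith))
        have hqpos : (0:ℝ) < (y s) ^ q := Real.rpow_pos_of_pos hyspos q
        calc M * (y s) ^ q ≤ (y s) ^ (p - q) * (y s) ^ q :=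
              mul_le_mul_of_nonneg_right hMle hqpos.le
          _ = (y s) ^ p := by rw [← Real.rpow_add hyspos]; ring_nf
      have h2 : (y s) ^ p < (y t₀) ^ p := Real.rpow_lt_rpow hyspos.le hyst hp0
      simp only [hD]
      rw [abs_of_pos hyt₀pos, abs_of_pos hyspos]
      linarith
  have hcw : ContinuousWithinAt D (Set.Ico (0:ℝ) b) t₀ := hDcont t₀ ⟨ht₀0, ht₀b⟩
  have hev : ∀ᶠ x in nhdsWithin t₀ (Set.Ico (0:ℝ) b), 0 < D x :=
    hcw.eventually (eventually_gt_nhds hDt₀)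
  rw [eventually_nhdsWithin_iff] at hev
  obtain ⟨δ, hδ, hball⟩ := Metric.eventually_nhds_iff.mp hev
  have hlb : t₀ + δ ≤ t₀ := by
    apply le_csInf hSne
    intro s hs
    by_contra hlt
    push_neg at hlt
    have hts : t₀ ≤ s := csInf_le hSbdd hs
    have hdist : dist s t₀ < δ := by
      rw [Real.dist_eq, abs_of_nonneg (by linarith)]; linarith
    exact absurd (hball hdist ⟨le_trans ht₀0 hts, hs.1.2⟩) (not_lt.mpr hs.2)
  linarith

set_option maxHeartbeats 2000000 in
theorem delay_eq_blowup_M (τ M p q : ℝ) (hτ : 0 < τ) (hM : 1 ≤ M)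
    (hq : 0 < q) (hp : max q 1 < p)
    (φ : ℝ → ℝ) (hφcont : ContinuousOn φ (Set.Icc (-τ) 0))
    (hφ0 : M ≤ φ 0)
    (hφ : ∀ t ∈ Set.Icc (-τ) (0:ℝ), M ^ (1 / p) * |φ t| ^ (q / p) ≤ φ 0)
    (hφτ : M ^ (1 / p) * |φ (-τ)| ^ (q / p) < φ 0) :
    (¬ ∃ y : ℝ → ℝ, DelaySolGlobal τ M p q φ y) ∧
    ∀ (Tstar : ℝ) (y : ℝ → ℝ), 0 < Tstar →
      DelaySolOn τ M p q φ y Tstar →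
      (¬ ∃ b : ℝ, Tstar < b ∧ ∃ z : ℝ → ℝ, DelaySolOn τ M p q φ z b ∧
          ∀ t ∈ Set.Ico (-τ) Tstar, z t = y t) →
      Filter.Tendsto y (nhdsWithin Tstar (Set.Iio Tstar)) Filter.atTop := by
  have hp1 : 1 < p := lt_of_le_of_lt (le_max_right q 1) hp
  have hpq : q < p := lt_of_le_of_lt (le_max_left q 1) hp
  have hp0 : (0:ℝ) < p := zero_lt_one.trans hp1
  have hM0 : (0:ℝ) ≤ M := zero_le_one.trans hM
  have hφ0pos : (0:ℝ) < φ 0 := lt_of_lt_of_le zero_lt_one (hM.trans hφ0)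
  have hφ01 : (1:ℝ) ≤ φ 0 := hM.trans hφ0
  have hτ' : -τ ≤ 0 := neg_nonpos.mpr hτ.le
  have key0 : M ≤ φ 0 ^ (p - q) := by
    have h := delay_pow_le hM0 hp0 (hφ 0 ⟨hτ', le_refl 0⟩)
    rw [abs_of_pos hφ0pos] at h
    have hq0 : (0:ℝ) < φ 0 ^ q := Real.rpow_pos_of_pos hφ0pos q
    rw [Real.rpow_sub hφ0pos, le_div_iff₀ hq0]
    exact h
  constructor
  · -- no global solution
    rintro ⟨y, hc, hist, hode⟩
    have hsol : ∀ b, DelaySolOn τ M p q φ y b :=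
      fun b => ⟨hc.mono (fun x hx => hx.1), hist, fun t ht => hode t ht.1⟩
    have hDpos : ∀ t, 0 < t → 0 < |y t| ^ p - M * |y (t - τ)| ^ q := fun t ht =>
      delay_core τ M p q hτ hM hq hp φ y hφ0 hφ hφτ (hsol (t+1)) t ⟨ht, lt_add_one t⟩
    have hmono : StrictMonoOn y (Set.Ici 0) := by
      apply strictMonoOn_of_deriv_pos (convex_Ici 0)
      · exact hc.mono (fun x hx => le_trans hτ' hx)
      · intro x hx
        rw [interior_Ici] at hx
        rw [(hode x hx).deriv]
        exact hDpos x hx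
    have hy0 : y 0 = φ 0 := hist 0 ⟨hτ', le_refl 0⟩
    have hyge : ∀ t, 0 ≤ t → φ 0 ≤ y t := by
      intro t ht
      rcases eq_or_lt_of_le ht with h | h
      · rw [← h, hy0]
      · exact (hy0 ▸ hmono (Set.mem_Ici.mpr (le_refl 0)) (Set.mem_Ici.mpr ht) h).le
    have hypos : ∀ t, 0 ≤ t → 0 < y t := fun t ht => lt_of_lt_of_le hφ0pos (hyge t ht)
    by_cases hbdd : BddAbove (y '' Set.Ici 0)
    · -- bounded case: derivative eventually bounded below by a positive constant
      set L : ℝ := sSup (y '' Set.Ici 0) with hL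
      have hle : ∀ t, 0 ≤ t → y t ≤ L := fun t ht => le_csSup hbdd ⟨t, ht, rfl⟩
      have hL1 : φ 0 < L :=
        lt_of_lt_of_le (hy0 ▸ hmono Set.self_mem_Ici (Set.mem_Ici.mpr zero_le_one) one_pos) (hle 1 zero_le_one)
      have hLpos : 0 < L := hφ0pos.trans hL1
      have hMLq : M * L ^ q < L ^ p := by
        have h1 : M < L ^ (p - q) :=
          lt_of_le_of_lt key0 (Real.rpow_lt_rpow hφ0pos.le hL1 (by linarith))
        have h2 : (0:ℝ) < L ^ q := Real.rpow_pos_of_pos hLpos q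
        calc M * L ^ q < L ^ (p - q) * L ^ q := mul_lt_mul_of_pos_right h1 h2
          _ = L ^ p := by rw [← Real.rpow_add hLpos]; ring_nf
      have hMLq0 : 0 ≤ M * L ^ q := mul_nonneg hM0 (Real.rpow_nonneg hLpos.le q)
      have hroot : (M * L ^ q) ^ (1/p) < L := by
        have h := Real.rpow_lt_rpow hMLq0 hMLq (one_div_pos.mpr hp0)
        rwa [← Real.rpow_mul hLpos.le, mul_one_div_cancel hp0.ne', Real.rpow_one] at h
      have hex : ∃ a, 0 ≤ a ∧ (M * L ^ q) ^ (1/p) < y a := by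
        by_contra h
        push_neg at h
        have : L ≤ (M * L ^ q) ^ (1/p) := by
          apply csSup_le (Set.Nonempty.image y ⟨0, Set.self_mem_Ici⟩)
          rintro _ ⟨t, ht, rfl⟩
          exact h t ht
        linarith
      obtain ⟨a, ha0, hay⟩ := hex
      have hεpos : 0 < (y a) ^ p - M * L ^ q := by
        have h := Real.rpow_lt_rpow (Real.rpow_nonneg hMLq0 _) hay hp0
        rw [← Real.rpow_mul hMLq0, one_div_mul_cancel hp0.ne', Real.rpow_one] at h
        exact sub_pos.mpr h
      set ε : ℝ := (y a) ^ p - M * L ^ q with hε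
      have hDlb : ∀ t, a + τ ≤ t → ε ≤ |y t| ^ p - M * |y (t - τ)| ^ q := by
        intro t ht
        have ht0 : (0:ℝ) ≤ t := by linarith
        have htτ : (0:ℝ) ≤ t - τ := by linarith
        have h1 : (y a) ^ p ≤ (y t) ^ p :=
          Real.rpow_le_rpow (hypos a ha0).le (hmono.monotoneOn ha0 ht0 (by linarith)) hp0.le
        have h2 : M * (y (t - τ)) ^ q ≤ M * L ^ q :=
          mul_le_mul_of_nonneg_left
            (Real.rpow_le_rpow (hypos _ htτ).le (hle _ htτ) hq.le) hM0
        rw [abs_of_pos (hypos t ht0), abs_of_pos (hypos _ htτ)]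
        simp only [hε]
        linarith
      -- linear growth contradiction
      set w : ℝ → ℝ := fun t => y t - ε * t with hw
      have hwmono : MonotoneOn w (Set.Ici (a + τ)) := by
        apply monotoneOn_of_deriv_nonneg (convex_Ici (a + τ))
        · intro t ht
          exact ((hode t (by simp only [Set.mem_Ioi]; exact lt_of_lt_of_le (by linarith) ht)).sub
            ((hasDerivAt_id t).const_mul ε)).continuousAt.continuousWithinAt
        · intro t ht
          rw [interior_Ici] at ht
          exact ((hode t (by simp only [Set.mem_Ioi]; linarith [(Set.mem_Ioi.mp ht).le])).sub
            ((hasDerivAt_id t).const_mul ε)).differentiableAt.differentiableWithinAt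
        · intro t ht
          rw [interior_Ici] at ht
          have hder : HasDerivAt w ((|y t| ^ p - M * |y (t - τ)| ^ q) - ε * 1) t :=
            (hode t (by simp only [Set.mem_Ioi]; linarith [(Set.mem_Ioi.mp ht).le])).sub
              ((hasDerivAt_id t).const_mul ε)
          rw [hder.deriv, mul_one, sub_nonneg]
          exact hDlb t (Set.mem_Ioi.mp ht).le
      set T : ℝ := a + τ + (L - y (a + τ) + 1) / ε with hT
      have hyaτL : y (a + τ) ≤ L := hle _ (by linarith)
      have hTge : a + τ ≤ T := by
        have : 0 < (L - y (a + τ) + 1) / ε := div_pos (by linarith) hεpos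
        rw [hT]; linarith
      have hwle : w (a + τ) ≤ w T := hwmono (Set.mem_Ici.mpr (le_refl _)) (Set.mem_Ici.mpr hTge) hTge
      have hcomp : ε * (T - (a + τ)) = L - y (a + τ) + 1 := by
        have h : T - (a + τ) = (L - y (a + τ) + 1) / ε := by rw [hT]; ring
        rw [h, mul_div_cancel₀ _ hεpos.ne']
      simp only [hw] at hwle
      have hTL : y T ≤ L := hle T (by linarith)
      nlinarith
    · -- unbounded case: Riccati blow-up
      obtain ⟨_, ⟨t₂, ht₂, rfl⟩, h2M⟩ := (not_bddAbove_iff.mp hbdd) ((2*M) ^ (1/(p-q)))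
      have ht₂0 : (0:ℝ) ≤ t₂ := ht₂
      have h2M0 : (0:ℝ) ≤ 2 * M := by linarith
      apply riccati_blowup p hp1
        (fun t ht => hode t (by simp only [Set.mem_Ioi]; exact lt_of_lt_of_le (by linarith) ht))
        (fun t (ht : t₂ + τ ≤ t) => (hφ01.trans (hyge t (by linarith))))
      intro t ht
      simp only [Set.mem_Ici] at ht
      have ht0 : (0:ℝ) ≤ t := by linarith
      have htτ : (0:ℝ) ≤ t - τ := by linarith
      have hyt2 : y t₂ ≤ y t := hmono.monotoneOn ht₂0 ht0 (by linarith)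
      have h2Mlt : 2 * M < (y t) ^ (p - q) := by
        have h := Real.rpow_lt_rpow (Real.rpow_nonneg h2M0 _) (lt_of_lt_of_le h2M hyt2)
          (by linarith : (0:ℝ) < p - q)
        rwa [← Real.rpow_mul h2M0, one_div_mul_cancel (by linarith : p - q ≠ 0),
          Real.rpow_one] at h
      have hMyq : M * (y t) ^ q ≤ (y t) ^ p / 2 := by
        have hqpos : (0:ℝ) < (y t) ^ q := Real.rpow_pos_of_pos (hypos t ht0) q
        have : 2 * M * (y t) ^ q ≤ (y t) ^ (p - q) * (y t) ^ q :=
          mul_le_mul_of_nonneg_right h2Mlt.le hqpos.le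
        have heq : (y t) ^ (p - q) * (y t) ^ q = (y t) ^ p := by
          rw [← Real.rpow_add (hypos t ht0)]; ring_nf
        linarith [heq ▸ this]
      have hshift : M * |y (t - τ)| ^ q ≤ M * (y t) ^ q := by
        rw [abs_of_pos (hypos _ htτ)]
        exact mul_le_mul_of_nonneg_left
          (Real.rpow_le_rpow (hypos _ htτ).le (hmono.monotoneOn htτ ht0 (by linarith)) hq.le) hM0
      rw [abs_of_pos (hypos t ht0)]
      linarith
  · -- maximal solutions blow up
    intro Tstar y hT hy hmax
    obtain ⟨hc, hist, hode⟩ := hy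
    have hDpos : ∀ t ∈ Set.Ioo (0:ℝ) Tstar, 0 < |y t| ^ p - M * |y (t - τ)| ^ q :=
      delay_core τ M p q hτ hM hq hp φ y hφ0 hφ hφτ ⟨hc, hist, hode⟩
    have hmono : StrictMonoOn y (Set.Ico 0 Tstar) := by
      apply strictMonoOn_of_deriv_pos (convex_Ico 0 Tstar)
      · exact hc.mono (fun x hx => ⟨le_trans hτ' hx.1, hx.2⟩)
      · intro x hx
        rw [interior_Ico] at hx
        rw [(hode x hx).deriv]
        exact hDpos x hx
    have hy0 : y 0 = φ 0 := hist 0 ⟨hτ', le_refl 0⟩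
    have hyge : ∀ t ∈ Set.Ico (0:ℝ) Tstar, φ 0 ≤ y t := by
      intro t ht
      rcases eq_or_lt_of_le ht.1 with h | h
      · rw [← h, hy0]
      · exact (hy0 ▸ hmono ⟨le_refl 0, hT⟩ ht h).le
    have hypos : ∀ t ∈ Set.Ico (0:ℝ) Tstar, 0 < y t :=
      fun t ht => lt_of_lt_of_le hφ0pos (hyge t ht)
    by_cases hbdd : BddAbove (y '' Set.Ioo 0 Tstar)
    · -- bounded: construct an extension, contradicting maximality
      exfalso
      apply hmax
      have hne : (Set.Ioo (0:ℝ) Tstar).Nonempty := ⟨Tstar/2, by constructor <;> linarith⟩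
      set L : ℝ := sSup (y '' Set.Ioo 0 Tstar) with hL
      have htend : Tendsto y (nhdsWithin Tstar (Set.Iio Tstar)) (nhds L) :=
        MonotoneOn.tendsto_nhdsWithin_Ioo_left hne
          ((hmono.mono Set.Ioo_subset_Ico_self).monotoneOn) hbdd
      have hleL : ∀ t ∈ Set.Ioo (0:ℝ) Tstar, y t ≤ L := fun t ht => le_csSup hbdd ⟨t, ht, rfl⟩
      have hhalf : Tstar/2 ∈ Set.Ioo (0:ℝ) Tstar := ⟨by linarith, by linarith⟩
      have hφ0L : φ 0 < L :=
        lt_of_lt_of_le (hy0 ▸ hmono ⟨le_refl 0, hT⟩ ⟨hhalf.1.le, hhalf.2⟩ hhalf.1)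
          (hleL _ hhalf)
      have hL1 : (1:ℝ) ≤ L := le_of_lt (lt_of_le_of_lt hφ01 hφ0L)
      have hLpos : (0:ℝ) < L := lt_of_lt_of_le zero_lt_one hL1
      -- bound for the forcing term
      set J : Set ℝ := Set.Icc (Tstar - τ) (Tstar - τ/2) with hJ
      have hJsub : J ⊆ Set.Ico (-τ) Tstar := fun x hx => ⟨by linarith [hx.1], by linarith [hx.2]⟩
      obtain ⟨B, hB⟩ := (isCompact_Icc : IsCompact J).exists_bound_of_continuousOn (hc.mono hJsub)
      have hB0 : (0:ℝ) ≤ B := le_trans (norm_nonneg _) (hB (Tstar - τ) ⟨le_refl _, by linarith⟩)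
      set C : ℝ := (L + 1) ^ p + M * B ^ q with hC
      have hC0 : (0:ℝ) ≤ C := by
        have h1 : (0:ℝ) ≤ (L + 1) ^ p := Real.rpow_nonneg (by linarith) p
        have h2 : (0:ℝ) ≤ M * B ^ q := mul_nonneg hM0 (Real.rpow_nonneg hB0 q)
        simp only [hC]; linarith
      set ε : ℝ := min (τ/2) ((1/2) / (C + 1)) with hε
      have hε0 : 0 < ε := lt_min (by linarith) (div_pos one_half_pos (by linarith))
      have hετ : ε ≤ τ/2 := min_le_left _ _
      have hεC : C * ε ≤ 1/2 := by
        have hC1 : (0:ℝ) < C + 1 := by linarith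
        have h1 : C * ε ≤ C * ((1/2) / (C + 1)) :=
          mul_le_mul_of_nonneg_left (min_le_right _ _) hC0
        have h2 : C / (C + 1) ≤ 1 := (div_le_one hC1).mpr (by linarith)
        have h3 : C * ((1/2) / (C + 1)) = (C / (C + 1)) * (1/2) := by ring
        nlinarith
      set b' : ℝ := Tstar + ε with hb'
      have hTb' : Tstar < b' := by rw [hb']; linarith
      set g : ℝ → ℝ := fun t => M * |y (t - τ)| ^ q with hg
      set v : ℝ → ℝ → ℝ := fun t x => |x| ^ p - g t with hv
      have hgcont : ContinuousOn g (Set.Icc Tstar b') := by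
        apply continuousOn_const.mul
        apply ContinuousOn.rpow_const _ (fun x _ => Or.inr hq.le)
        apply ContinuousOn.abs
        apply hc.comp ((continuous_id.sub continuous_const).continuousOn)
        intro x hx
        simp only [Set.mem_Icc, hb'] at hx
        simp only [id_eq, Set.mem_Ico, Pi.sub_apply]
        exact ⟨by linarith, by linarith [hετ]⟩
      set K : ℝ := p * (L + 1) ^ (p - 1) with hK
      have hK0 : (0:ℝ) ≤ K := mul_nonneg hp0.le (Real.rpow_nonneg (by linarith) _)
      have hballIcc : Metric.closedBall L ((1/2 : NNReal) : ℝ) = Set.Icc (L - 1/2) (L + 1/2) := by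
        rw [Real.closedBall_eq_Icc]; norm_num
      have hpl : IsPicardLindelof v (tmin := Tstar) (tmax := b') ⟨Tstar, ⟨le_refl _, hTb'.le⟩⟩ L
          (1/2 : NNReal) 0 ⟨C, hC0⟩ K.toNNReal := by
        refine ⟨?_, ?_, ?_, ?_⟩
        · -- Lipschitz
          intro t _
          apply Convex.lipschitzOnWith_of_nnnorm_hasDerivWithin_le
            (f' := fun x => p * x ^ (p - 1)) (convex_closedBall L ((1/2 : NNReal) : ℝ))
          · intro x hx
            rw [hballIcc] at hx
            have hxpos : 0 < x := by linarith [hx.1]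
            have h1 : HasDerivAt (fun u : ℝ => u ^ p - g t) (p * x ^ (p - 1)) x :=
              (Real.hasDerivAt_rpow_const (Or.inl hxpos.ne')).sub_const (g t)
            apply h1.hasDerivWithinAt.congr
            · intro u hu
              rw [hballIcc] at hu
              have : 0 < u := by linarith [hu.1]
              simp only [hv, abs_of_pos this]
            · simp only [hv, abs_of_pos hxpos]
          · intro x hx
            rw [hballIcc] at hx
            have hxpos : 0 < x := by linarith [hx.1]
            rw [← NNReal.coe_le_coe, coe_nnnorm, Real.coe_toNNReal K hK0, Real.norm_eq_abs,
              abs_of_nonneg (mul_nonneg hp0.le (Real.rpow_nonneg hxpos.le _))]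
            exact mul_le_mul_of_nonneg_left
              (Real.rpow_le_rpow hxpos.le (by linarith [hx.2]) (by linarith)) hp0.le
        · -- continuity in time
          intro x _
          exact continuousOn_const.sub hgcont
        · -- norm bound
          intro t ht x hx
          rw [hballIcc] at hx
          have h1 : |x| ≤ L + 1 := by
            rw [abs_le]; constructor <;> [linarith [hx.1]; linarith [hx.2]]
          have h2 : |x| ^ p ≤ (L + 1) ^ p := Real.rpow_le_rpow (abs_nonneg x) h1 hp0.le
          have htJ : t - τ ∈ J := by
            simp only [hJ, Set.mem_Icc]
            simp only [Set.mem_Icc, hb'] at ht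
            exact ⟨by linarith [ht.1], by linarith [ht.2, hετ]⟩
          have h3 : |y (t - τ)| ≤ B := by
            have := hB (t - τ) htJ
            rwa [Real.norm_eq_abs] at this
          have h4 : g t ≤ M * B ^ q := by
            simp only [hg]
            exact mul_le_mul_of_nonneg_left
              (Real.rpow_le_rpow (abs_nonneg _) h3 hq.le) hM0
          have h5 : (0:ℝ) ≤ g t :=
            mul_nonneg hM0 (Real.rpow_nonneg (abs_nonneg _) q)
          simp only [hv, Real.norm_eq_abs]
          calc |(|x| ^ p - g t)| ≤ |(|x| ^ p)| + |g t| := abs_sub _ _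
            _ = |x| ^ p + g t := by
                rw [abs_of_nonneg (Real.rpow_nonneg (abs_nonneg x) p), abs_of_nonneg h5]
            _ ≤ C := by simp only [hC]; linarith
        · -- smallness
          show C * max (b' - Tstar) (Tstar - Tstar) ≤ _
          have : max (b' - Tstar) (Tstar - Tstar) = ε := by
            rw [hb']
            simp [hε0.le]
          rw [this]
          simpa using hεC
      obtain ⟨f, hf0, hfder⟩ := hpl.exists_eq_forall_mem_Icc_hasDerivWithinAt₀
      set z : ℝ → ℝ := fun t => if t < Tstar then y t else f t with hz
      have hzy : ∀ t, t < Tstar → z t = y t := fun t ht => if_pos ht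
      have hzf : ∀ t, Tstar ≤ t → z t = f t := fun t ht => if_neg (not_lt.mpr ht)
      have hzT : z Tstar = L := by rw [hzf Tstar (le_refl _)]; exact hf0
      have hfcont : ContinuousOn f (Set.Icc Tstar b') :=
        fun t ht => (hfder t ht).continuousWithinAt
      have htendz : Tendsto z (nhdsWithin Tstar (Set.Iio Tstar)) (nhds L) := by
        apply htend.congr'
        exact eventually_mem_nhdsWithin.mono (fun t ht => (hzy t ht).symm)
      have hcwleft : ContinuousWithinAt z (Set.Iio Tstar) Tstar := by
        rw [ContinuousWithinAt, hzT]; exact htendz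
      have hcwright : ContinuousWithinAt z (Set.Ici Tstar) Tstar := by
        have h1 : ContinuousWithinAt f (Set.Icc Tstar b') Tstar :=
          hfcont Tstar ⟨le_refl _, hTb'.le⟩
        rw [← Set.Ici_inter_Iic] at h1
        have h2 : ContinuousWithinAt f (Set.Ici Tstar) Tstar :=
          (continuousWithinAt_inter (Iic_mem_nhds hTb')).mp h1
        exact h2.congr (fun u hu => hzf u hu) (hzf Tstar (le_refl _))
      have hzcT : ContinuousAt z Tstar := by
        rw [ContinuousAt, ← nhdsLT_sup_nhdsGE Tstar, tendsto_sup]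
        refine ⟨?_, hcwright⟩
        rw [hzT]; exact htendz
      have hzcTτ : ContinuousAt z (Tstar - τ) := by
        have hyTτ : ContinuousAt y (Tstar - τ) := by
          apply hc.continuousAt
          rw [mem_nhds_iff]
          exact ⟨Set.Ioo (-τ) Tstar, Set.Ioo_subset_Ico_self, isOpen_Ioo,
            ⟨by linarith, by linarith⟩⟩
        apply hyTτ.congr
        apply Filter.eventuallyEq_of_mem (Iio_mem_nhds (by linarith : Tstar - τ < Tstar))
        intro s hs
        exact (hzy s hs).symm
      -- derivative of z away from Tstar
      have hder_ne : ∀ s ∈ Set.Ioo (0:ℝ) b', s ≠ Tstar →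
          HasDerivAt z (|z s| ^ p - M * |z (s - τ)| ^ q) s := by
        intro s hs hsne
        rcases lt_or_gt_of_ne hsne with hlt | hgt
        · have h := hode s ⟨hs.1, hlt⟩
          rw [hzy s hlt, hzy (s - τ) (by linarith)]
          apply h.congr_of_eventuallyEq
          exact Filter.eventuallyEq_of_mem (Iio_mem_nhds hlt) (fun u hu => hzy u hu)
        · have hmem : s ∈ Set.Icc Tstar b' := ⟨hgt.le, hs.2.le⟩
          have h := (hfder s hmem).hasDerivAt (Icc_mem_nhds hgt hs.2)
          have hval : v s (f s) = |z s| ^ p - M * |z (s - τ)| ^ q := by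
            have e1 : z s = f s := hzf s hgt.le
            have e2 : z (s - τ) = y (s - τ) := by
              apply hzy
              simp only [hb'] at hs
              linarith [hs.2, hετ]
            simp only [hv, hg, e1, e2]
          rw [hval] at h
          apply h.congr_of_eventuallyEq
          exact Filter.eventuallyEq_of_mem (Ioi_mem_nhds hgt)
            (fun u hu => hzf u (le_of_lt hu))
      -- z is a solution on [0, b')
      have hzc : ContinuousOn z (Set.Ico (-τ) b') := by
        intro t ht
        rcases lt_trichotomy t Tstar with hlt | heq | hgt
        · have h1 : ContinuousWithinAt y (Set.Ico (-τ) Tstar) t := hc t ⟨ht.1, hlt⟩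
          have h2 : ContinuousWithinAt z (Set.Ico (-τ) Tstar) t :=
            h1.congr (fun s hs => hzy s hs.2) (hzy t hlt)
          have hset : Set.Ico (-τ) b' ∩ Set.Iio Tstar = Set.Ico (-τ) Tstar := by
            ext u
            simp only [Set.mem_inter_iff, Set.mem_Ico, Set.mem_Iio]
            constructor
            · rintro ⟨⟨h1', _⟩, h2'⟩; exact ⟨h1', h2'⟩
            · rintro ⟨h1', h2'⟩; exact ⟨⟨h1', h2'.trans hTb'⟩, h2'⟩
          exact (continuousWithinAt_inter (Iio_mem_nhds hlt)).mp (hset ▸ h2)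
        · rw [heq]; exact hzcT.continuousWithinAt
        · have h1 : ContinuousWithinAt f (Set.Ioo Tstar b') t :=
            (hfcont t ⟨hgt.le, ht.2.le⟩).mono Set.Ioo_subset_Icc_self
          have h3 : ContinuousWithinAt z (Set.Ioo Tstar b') t :=
            h1.congr (fun s hs => hzf s hs.1.le) (hzf t hgt.le)
          have hset : Set.Ico (-τ) b' ∩ Set.Ioi Tstar = Set.Ioo Tstar b' := by
            ext u
            simp only [Set.mem_inter_iff, Set.mem_Ico, Set.mem_Ioi, Set.mem_Ioo]
            constructor
            · rintro ⟨⟨_, h2'⟩, h3'⟩; exact ⟨h3', h2'⟩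
            · rintro ⟨h1', h2'⟩; exact ⟨⟨by linarith, h2'⟩, h1'⟩
          exact (continuousWithinAt_inter (Ioi_mem_nhds hgt)).mp (hset ▸ h3)
      have hzhist : ∀ t ∈ Set.Icc (-τ) (0:ℝ), z t = φ t := by
        intro t ht
        rw [hzy t (lt_of_le_of_lt ht.2 hT)]
        exact hist t ht
      have hzode : ∀ t ∈ Set.Ioo (0:ℝ) b',
          HasDerivAt z (|z t| ^ p - M * |z (t - τ)| ^ q) t := by
        intro t ht
        rcases eq_or_ne t Tstar with rfl | hne
        · -- glue at Tstar
          have hGcont : ContinuousAt (fun s => |z s| ^ p - M * |z (s - τ)| ^ q) t := by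
            apply ContinuousAt.sub
            · exact hzcT.abs.rpow_const (Or.inr hp0.le)
            · apply ContinuousAt.mul continuousAt_const
              apply ContinuousAt.rpow_const _ (Or.inr hq.le)
              apply ContinuousAt.abs
              exact ContinuousAt.comp (g := z) (f := fun s : ℝ => s - τ) hzcTτ
                ((continuous_id.sub continuous_const).continuousAt)
          exact hasDerivAt_of_local_glue ht.1 ht.2 hder_ne hzcT hGcont
        · exact hder_ne t ht hne
      exact ⟨b', hTb', z, ⟨hzc, hzhist, hzode⟩, fun t ht => hzy t ht.2⟩
    · -- unbounded: y tends to +infinity at Tstar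
      rw [tendsto_atTop]
      intro K
      obtain ⟨_, ⟨s, hs, rfl⟩, hKs⟩ := (not_bddAbove_iff.mp hbdd) K
      filter_upwards [Ioo_mem_nhdsLT_of_mem
        (Set.mem_Ioc.mpr ⟨hs.2, le_refl Tstar⟩ : Tstar ∈ Set.Ioc s Tstar)] with t ht
      exact le_of_lt (lt_of_lt_of_le hKs
        (hmono.monotoneOn ⟨hs.1.le, hs.2⟩ ⟨(hs.1.trans ht.1).le, ht.2⟩ ht.1.le))
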